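/- Let X be compact metric, h : X → [0,∞) bounded continuous, f̃ : K(X) → [0,1] upper semicontinuous, and Pₖ ⇀ P weakly-* finite positive measures on K(X) with uniformly bounded average stopping times ∫ T(γ) dPₖ ≤ C. Then limsup_{k→∞} ∫ h(π_∞(γ)) f̃(γ) dPₖ(γ) ≤ ∫ h(π_∞(γ)) f̃(γ) dP(γ), where π_∞(γ) is the final point of γ. (The proof truncates at time M via Chebyshev: Pₖ({T > M}) ≤ C/M, uses continuity of γ ↦ γ(M), and lets M → ∞.) -/

import Mathlib

open scoped NNReal ENNReal
open MeasureTheory Filter Topology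

/-- The space `K(X)` of 1-Lipschitz eventually constant curves `[0,∞) → X`,
topologized by uniform convergence on compact sets. -/
abbrev KX (X : Type*) [MetricSpace X] : Type _ :=
  {γ : C(ℝ≥0, X) // LipschitzWith 1 γ ∧ ∃ T : ℝ≥0, ∀ t, T ≤ t → γ t = γ T}

/-- The stopping time `T(γ)`: the least `T` such that `γ` is constant on `[T,∞)`. -/
noncomputable def stopTime {X : Type*} [MetricSpace X] (γ : KX X) : ℝ≥0 :=
  sInf {T : ℝ≥0 | ∀ t, T ≤ t → γ.1 t = γ.1 T}





instance instKXMetrizable (X : Type*) [MetricSpace X] :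
    TopologicalSpace.PseudoMetrizableSpace (KX X) :=
  letI : TopologicalSpace.PseudoMetrizableSpace C(ℝ≥0, X) := UniformSpace.pseudoMetrizableSpace
  Topology.IsInducing.subtypeVal.pseudoMetrizableSpace

section Aux
variable {X : Type*} [MetricSpace X]

lemma continuous_evalKX (t : ℝ≥0) : Continuous (fun γ : KX X => γ.1 t) :=
  (ContinuousEvalConst.continuous_eval_const t).comp continuous_subtype_val

lemma stopTime_spec (γ : KX X) {t : ℝ≥0} (ht : stopTime γ ≤ t) :
    γ.1 t = γ.1 (stopTime γ) := by
  rcases eq_or_lt_of_le ht with rfl | hlt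
  · rfl
  have hS : {T : ℝ≥0 | ∀ t, T ≤ t → γ.1 t = γ.1 T}.Nonempty := γ.2.2
  have key : ∀ s : ℝ≥0, stopTime γ < s → γ.1 s = γ.1 t := by
    intro s hs
    obtain ⟨T, hT, hTlt⟩ := exists_lt_of_csInf_lt hS (lt_min hs hlt)
    rw [hT s (le_of_lt (lt_of_lt_of_le hTlt (min_le_left _ _))),
        hT t (le_of_lt (lt_of_lt_of_le hTlt (min_le_right _ _)))]
  have hdist : ∀ ε : ℝ≥0, 0 < ε → dist (γ.1 (stopTime γ)) (γ.1 t) ≤ ε := by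
    intro ε hε
    have h1 : γ.1 (stopTime γ + ε) = γ.1 t := key _ (lt_add_of_pos_right _ hε)
    have h2 : dist (γ.1 (stopTime γ)) (γ.1 (stopTime γ + ε)) ≤ dist (stopTime γ) (stopTime γ + ε) := by
      have := γ.2.1.dist_le_mul (stopTime γ) (stopTime γ + ε)
      simpa using this
    have h3 : dist (stopTime γ) (stopTime γ + ε) = (ε : ℝ) := by
      have : ((stopTime γ : ℝ)) - ((stopTime γ : ℝ) + ε) = -(ε : ℝ) := by ring
      rw [NNReal.dist_eq]
      push_cast
      rw [this, abs_neg, abs_of_nonneg ε.coe_nonneg]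
    rw [← h1]
    rw [h3] at h2
    exact h2
  have h0 : dist (γ.1 (stopTime γ)) (γ.1 t) ≤ 0 := by
    apply le_of_forall_pos_le_add
    intro ε hε
    rw [zero_add]
    calc dist (γ.1 (stopTime γ)) (γ.1 t) ≤ ((ε.toNNReal : ℝ≥0) : ℝ) :=
      hdist ε.toNNReal (by simpa using hε)
    _ = ε := Real.coe_toNNReal _ hε.le
  exact (dist_le_zero.1 h0).symm

lemma isClosed_stopTime_le (M : ℝ≥0) : IsClosed {γ : KX X | stopTime γ ≤ M} := by
  have hset : {γ : KX X | stopTime γ ≤ M} =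
      ⋂ (t : ℝ≥0) (_ : M ≤ t), {γ : KX X | γ.1 t = γ.1 M} := by
    ext γ
    simp only [Set.mem_setOf_eq, Set.mem_iInter]
    constructor
    · intro hγ t ht
      rw [stopTime_spec γ (hγ.trans ht), stopTime_spec γ hγ]
    · intro hγ
      exact csInf_le (OrderBot.bddBelow _) hγ
  rw [hset]
  exact isClosed_iInter fun t => isClosed_iInter fun _ =>
    isClosed_eq (continuous_evalKX t) (continuous_evalKX M)

lemma measurable_stopTime [MeasurableSpace (KX X)] [BorelSpace (KX X)] :
    Measurable (stopTime : KX X → ℝ≥0) := by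
  apply measurable_of_Iic
  intro M
  exact (isClosed_stopTime_le M).measurableSet

lemma measurable_endpoint [MeasurableSpace X] [BorelSpace X]
    [MeasurableSpace (KX X)] [BorelSpace (KX X)] :
    Measurable (fun γ : KX X => γ.1 (stopTime γ)) := by
  apply measurable_of_tendsto_metrizable (f := fun (n : ℕ) (γ : KX X) => γ.1 (n : ℝ≥0))
  · exact fun n => (continuous_evalKX _).measurable
  · rw [tendsto_pi_nhds]
    intro γ
    obtain ⟨N, hN⟩ := exists_nat_ge (stopTime γ)
    apply tendsto_atTop_of_eventually_const (i₀ := N)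
    intro i hi
    exact stopTime_spec γ (hN.trans (by exact_mod_cast hi))

end Aux

lemma usc_mul_cont {α : Type*} [TopologicalSpace α] {f g : α → ℝ}
    (hf : Continuous f) (hf0 : ∀ x, 0 ≤ f x)
    (hg : UpperSemicontinuous g) (hg0 : ∀ x, 0 ≤ g x) :
    UpperSemicontinuous (fun x => f x * g x) := by
  intro x c hc
  simp only at hc
  have cont : Tendsto (fun δ : ℝ => (f x + δ) * (g x + δ)) (𝓝 0) (𝓝 (f x * g x)) := by
    have h1 : ContinuousAt (fun δ : ℝ => (f x + δ) * (g x + δ)) 0 := by fun_prop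
    have h2 := h1.tendsto
    simpa using h2
  have hev : ∀ᶠ δ : ℝ in 𝓝[>] 0, (f x + δ) * (g x + δ) < c :=
    Eventually.filter_mono nhdsWithin_le_nhds (cont.eventually_lt_const hc)
  obtain ⟨δ, hδc, hδpos⟩ := (hev.and self_mem_nhdsWithin).exists
  filter_upwards [hf.continuousAt.eventually_lt_const (lt_add_of_pos_right (f x) hδpos),
    hg x (g x + δ) (lt_add_of_pos_right _ hδpos)] with y hfy hgy
  calc f y * g y ≤ (f x + δ) * g y := mul_le_mul_of_nonneg_right hfy.le (hg0 y)
    _ ≤ (f x + δ) * (g x + δ) := mul_le_mul_of_nonneg_left hgy.le (by linarith [hf0 x])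
    _ < c := hδc



lemma limsup_lintegral_usc {Ω : Type*} [MeasurableSpace Ω] [TopologicalSpace Ω]
    [OpensMeasurableSpace Ω]
    {μ : Measure Ω} {μs : ℕ → Measure Ω}
    (hclosed : ∀ F : Set Ω, IsClosed F → atTop.limsup (fun i => μs i F) ≤ μ F)
    {Cm : ℝ≥0∞} (hCm : Cm ≠ ⊤) (hmassk : ∀ i, μs i Set.univ ≤ Cm)
    {g : Ω → ℝ} (hg : UpperSemicontinuous g) (g0 : ∀ x, 0 ≤ g x) {B : ℝ}
    (gB : ∀ x, g x ≤ B) :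
    atTop.limsup (fun i => ∫⁻ x, ENNReal.ofReal (g x) ∂(μs i)) ≤
      ∫⁻ x, ENNReal.ofReal (g x) ∂μ := by
  have gmble : Measurable g := hg.measurable
  have layer : ∀ ν : Measure Ω, ∫⁻ x, ENNReal.ofReal (g x) ∂ν =
      ∫⁻ t in Set.Ioi (0:ℝ), ν {a | t ≤ g a} :=
    fun ν => lintegral_eq_lintegral_meas_le ν (Eventually.of_forall g0) gmble.aemeasurable
  simp only [layer]
  have mble_layers : ∀ i, Measurable (fun t : ℝ => μs i {a | t ≤ g a}) :=
    fun i => Antitone.measurable (fun s t hst => measure_mono (fun a ha => le_trans hst ha))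
  have hbd : ∀ i, (fun t : ℝ => μs i {a | t ≤ g a}) ≤ᵐ[volume.restrict (Set.Ioi 0)]
      (Set.Ioc (0:ℝ) B).indicator (fun _ => Cm) := by
    intro i
    rw [Filter.EventuallyLE, ae_restrict_iff' measurableSet_Ioi]
    refine Eventually.of_forall (fun t ht => ?_)
    by_cases htB : t ≤ B
    · rw [Set.indicator_of_mem (Set.mem_Ioc.mpr ⟨Set.mem_Ioi.mp ht, htB⟩)]
      exact le_trans (measure_mono (Set.subset_univ _)) (hmassk i)
    · push_neg at htB
      have : {a | t ≤ g a} = (∅ : Set Ω) := by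
        ext a; simp only [Set.mem_setOf_eq, Set.mem_empty_iff_false, iff_false, not_le]
        exact lt_of_le_of_lt (gB a) htB
      rw [this]
      simp
  have hfin : ∫⁻ t in Set.Ioi (0:ℝ), (Set.Ioc (0:ℝ) B).indicator (fun _ => Cm) t ≠ ⊤ := by
    rw [lintegral_indicator measurableSet_Ioc, setLIntegral_const,
      Measure.restrict_apply measurableSet_Ioc]
    exact ENNReal.mul_ne_top hCm
      (ne_of_lt (lt_of_le_of_lt (measure_mono Set.inter_subset_left) measure_Ioc_lt_top))
  refine le_trans (limsup_lintegral_le _ mble_layers hbd hfin) ?_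
  apply lintegral_mono
  intro t
  apply hclosed
  have : {a | t ≤ g a} = (g ⁻¹' Set.Iio t)ᶜ := by
    ext a; simp [not_lt]
  rw [this]
  exact (upperSemicontinuous_iff_isOpen_preimage.1 hg t).isClosed_compl

/-- for `h : X → [0,∞)` bounded continuous, `f̃ : K(X) → [0,1]`
upper semicontinuous, and `Pₖ ⇀ P` weakly-* with uniformly bounded masses and
uniformly bounded average stopping times `∫ T dPₖ ≤ C`, one has
`limsup_k ∫ h(π_∞ γ) f̃(γ) dPₖ ≤ ∫ h(π_∞ γ) f̃(γ) dP`, where `π_∞ γ = γ(T(γ))`. -/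
theorem stmt_19 {X : Type*} [MetricSpace X] [CompactSpace X]
    [MeasurableSpace X] [BorelSpace X]
    [MeasurableSpace (KX X)] [BorelSpace (KX X)]
    (h : X → ℝ) (hh : Continuous h) (hh0 : ∀ x, 0 ≤ h x) (hhbd : ∃ C : ℝ, ∀ x, h x ≤ C)
    (ft : KX X → ℝ) (hft : UpperSemicontinuous ft)
    (hft01 : ∀ γ, ft γ ∈ Set.Icc (0 : ℝ) 1)
    (Pk : ℕ → Measure (KX X)) (P : Measure (KX X))
    [∀ k, IsFiniteMeasure (Pk k)] [IsFiniteMeasure P]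
    (hmass : ∃ C : ℝ≥0∞, C < ⊤ ∧ ∀ k, Pk k Set.univ ≤ C)
    (hconv : ∀ g : KX X → ℝ, Continuous g → (∃ C : ℝ, ∀ γ, |g γ| ≤ C) →
      Tendsto (fun k => ∫ γ, g γ ∂(Pk k)) atTop (nhds (∫ γ, g γ ∂P)))
    (C : ℝ) (hC : 0 < C)
    (hT : ∀ k, ∫⁻ γ, (stopTime γ : ℝ≥0∞) ∂(Pk k) ≤ ENNReal.ofReal C) :
    limsup (fun k => ∫ γ, h (γ.1 (stopTime γ)) * ft γ ∂(Pk k)) atTop ≤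
      ∫ γ, h (γ.1 (stopTime γ)) * ft γ ∂P := by
  classical
  obtain ⟨Cm, hCmlt, hCmk⟩ := hmass
  obtain ⟨Ch₀, hCh₀⟩ := hhbd
  set Ch : ℝ := max Ch₀ 0 with hChdef
  have hChnn : 0 ≤ Ch := le_max_right _ _
  have hhCh : ∀ x, h x ≤ Ch := fun x => (hCh₀ x).trans (le_max_left _ _)
  set F : KX X → ℝ := fun γ => h (γ.1 (stopTime γ)) * ft γ with hFdef
  set Fn : ℕ → KX X → ℝ := fun n γ => h (γ.1 ((n : ℝ≥0))) * ft γ with hFndef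
  -- pointwise bounds
  have hF0 : ∀ γ, 0 ≤ F γ := fun γ => mul_nonneg (hh0 _) (hft01 γ).1
  have hFCh : ∀ γ, F γ ≤ Ch :=
    fun γ => (mul_le_of_le_one_right (hh0 _) (hft01 γ).2).trans (hhCh _)
  have hFn0 : ∀ n γ, 0 ≤ Fn n γ := fun n γ => mul_nonneg (hh0 _) (hft01 γ).1
  have hFnCh : ∀ n γ, Fn n γ ≤ Ch :=
    fun n γ => (mul_le_of_le_one_right (hh0 _) (hft01 γ).2).trans (hhCh _)
  -- measurability
  have hftm : Measurable ft := hft.measurable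
  have hFm : Measurable F :=
    ((hh.measurable).comp measurable_endpoint).mul hftm
  have hFnm : ∀ n, Measurable (Fn n) :=
    fun n => ((hh.comp (continuous_evalKX _)).measurable).mul hftm
  have hFnusc : ∀ n, UpperSemicontinuous (Fn n) :=
    fun n => usc_mul_cont (hh.comp (continuous_evalKX _)) (fun γ => hh0 _) hft
      (fun γ => (hft01 γ).1)
  -- weak convergence in the FiniteMeasure sense
  let μ : FiniteMeasure (KX X) := ⟨P, inferInstance⟩
  let μs : ℕ → FiniteMeasure (KX X) := fun k => ⟨Pk k, inferInstance⟩
  have hconv' : Tendsto μs atTop (𝓝 μ) := by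
    rw [FiniteMeasure.tendsto_iff_forall_integral_tendsto]
    intro f
    exact hconv f f.continuous ⟨‖f‖, fun γ => by
      rw [← Real.norm_eq_abs]; exact f.norm_coe_le_norm γ⟩
  have hclosed : ∀ Fs : Set (KX X), IsClosed Fs →
      atTop.limsup (fun k => Pk k Fs) ≤ P Fs :=
    fun Fs hFs => FiniteMeasure.limsup_measure_closed_le_of_tendsto hconv' hFs
  -- step C : limsup of truncated integrals
  have hb_ne_top : ENNReal.ofReal Ch * Cm ≠ ⊤ := ENNReal.mul_ne_top ENNReal.ofReal_ne_top hCmlt.ne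
  have hLk_le : ∀ n k, ∫⁻ γ, ENNReal.ofReal (Fn n γ) ∂(Pk k) ≤ ENNReal.ofReal Ch * Cm := by
    intro n k
    calc ∫⁻ γ, ENNReal.ofReal (Fn n γ) ∂(Pk k)
        ≤ ∫⁻ _, ENNReal.ofReal Ch ∂(Pk k) :=
          lintegral_mono (fun γ => ENNReal.ofReal_le_ofReal (hFnCh n γ))
      _ = ENNReal.ofReal Ch * Pk k Set.univ := lintegral_const _
      _ ≤ ENNReal.ofReal Ch * Cm := mul_le_mul_of_nonneg_left (hCmk k) (zero_le)
  have hL_P_ne_top : ∀ n, ∫⁻ γ, ENNReal.ofReal (Fn n γ) ∂P ≠ ⊤ := by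
    intro n
    apply ne_of_lt
    calc ∫⁻ γ, ENNReal.ofReal (Fn n γ) ∂P
        ≤ ∫⁻ _, ENNReal.ofReal Ch ∂P :=
          lintegral_mono (fun γ => ENNReal.ofReal_le_ofReal (hFnCh n γ))
      _ = ENNReal.ofReal Ch * P Set.univ := lintegral_const _
      _ < ⊤ := ENNReal.mul_lt_top ENNReal.ofReal_lt_top (measure_lt_top P _)
  have stepC : ∀ n : ℕ, atTop.limsup (fun k => ∫ γ, Fn n γ ∂(Pk k)) ≤ ∫ γ, Fn n γ ∂P := by
    intro n
    have heq : ∀ (ν : Measure (KX X)), ∫ γ, Fn n γ ∂ν =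
        (∫⁻ γ, ENNReal.ofReal (Fn n γ) ∂ν).toReal := fun ν =>
      integral_eq_lintegral_of_nonneg_ae (Eventually.of_forall (hFn0 n))
        (hFnm n).aestronglyMeasurable
    simp only [heq]
    rw [ENNReal.limsup_toReal_eq hb_ne_top (Eventually.of_forall (hLk_le n))]
    apply ENNReal.toReal_mono (hL_P_ne_top n)
    exact limsup_lintegral_usc hclosed hCmlt.ne hCmk (hFnusc n) (hFn0 n) (hFnCh n)
  -- integrability
  have hint : ∀ (ν : Measure (KX X)) [IsFiniteMeasure ν] (f : KX X → ℝ),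
      Measurable f → (∀ γ, 0 ≤ f γ) → (∀ γ, f γ ≤ Ch) → Integrable f ν := by
    intro ν _ f hm h0 hb
    refine (integrable_const Ch).mono' hm.aestronglyMeasurable ?_
    exact Eventually.of_forall fun γ => by
      rw [Real.norm_eq_abs, abs_of_nonneg (h0 γ)]; exact hb γ
  -- step B : truncation error
  have stepB : ∀ (n : ℕ), 1 ≤ n → ∀ k,
      ∫ γ, F γ ∂(Pk k) ≤ (∫ γ, Fn n γ ∂(Pk k)) + Ch * C / n := by
    intro n hn k
    set S : Set (KX X) := {γ | (n : ℝ≥0) < stopTime γ} with hSdef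
    have hSmeas : MeasurableSet S := measurable_stopTime measurableSet_Ioi
    have hpt : ∀ γ, F γ ≤ Fn n γ + S.indicator (fun _ => Ch) γ := by
      intro γ
      by_cases hγ : (n : ℝ≥0) < stopTime γ
      · rw [Set.indicator_of_mem (show γ ∈ S from hγ)]
        exact (hFCh γ).trans (le_add_of_nonneg_left (hFn0 n γ))
      · push_neg at hγ
        have : γ.1 ((n : ℝ≥0)) = γ.1 (stopTime γ) := stopTime_spec γ hγ
        have hEq : F γ = Fn n γ := by rw [hFdef, hFndef]; simp only []; rw [this]
        rw [hEq]
        exact le_add_of_nonneg_right (Set.indicator_nonneg (fun _ _ => hChnn) γ)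
    have hintF : Integrable F (Pk k) := hint _ F hFm hF0 hFCh
    have hintFn : Integrable (Fn n) (Pk k) := hint _ (Fn n) (hFnm n) (hFn0 n) (hFnCh n)
    have hintInd : Integrable (S.indicator (fun _ => Ch)) (Pk k) :=
      (integrable_const Ch).indicator hSmeas
    have h1 : ∫ γ, F γ ∂(Pk k) ≤ ∫ γ, (Fn n γ + S.indicator (fun _ => Ch) γ) ∂(Pk k) :=
      integral_mono hintF (hintFn.add hintInd) hpt
    rw [integral_add hintFn hintInd] at h1
    have hcheb : Pk k S ≤ ENNReal.ofReal C / n := by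
      have hsub : S ⊆ {γ : KX X | (n : ℝ≥0∞) ≤ ((stopTime γ : ℝ≥0) : ℝ≥0∞)} := by
        intro γ hγ
        simp only [Set.mem_setOf_eq] at hγ ⊢
        exact_mod_cast le_of_lt hγ
      calc Pk k S ≤ Pk k {γ | (n : ℝ≥0∞) ≤ ((stopTime γ : ℝ≥0) : ℝ≥0∞)} := measure_mono hsub
        _ ≤ (∫⁻ γ, ((stopTime γ : ℝ≥0) : ℝ≥0∞) ∂(Pk k)) / n :=
            meas_ge_le_lintegral_div (measurable_stopTime.coe_nnreal_ennreal).aemeasurable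
              (by exact_mod_cast (Nat.pos_of_ne_zero (by omega)).ne') (ENNReal.natCast_ne_top n)
        _ ≤ ENNReal.ofReal C / n := ENNReal.div_le_div_right (hT k) _
    have hchebR : (Pk k S).toReal ≤ C / n := by
      have hne : (ENNReal.ofReal C / (n : ℝ≥0∞)) ≠ ⊤ :=
        ne_of_lt (ENNReal.div_lt_top ENNReal.ofReal_ne_top
          (by exact_mod_cast (Nat.pos_of_ne_zero (by omega)).ne'))
      have := ENNReal.toReal_mono hne hcheb
      rwa [ENNReal.toReal_div, ENNReal.toReal_ofReal hC.le, ENNReal.toReal_natCast] at this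
    have h2 : ∫ γ, S.indicator (fun _ => Ch) γ ∂(Pk k) ≤ Ch * C / n := by
      rw [integral_indicator_const _ hSmeas, smul_eq_mul, mul_comm]
      rw [mul_div_assoc]
      exact mul_le_mul_of_nonneg_left hchebR hChnn
    linarith
  -- uniform bounds for limsup manipulations
  have hbound_int : ∀ (ν : Measure (KX X)) [IsFiniteMeasure ν] (f : KX X → ℝ),
      Measurable f → (∀ γ, 0 ≤ f γ) → (∀ γ, f γ ≤ Ch) → ν Set.univ ≤ Cm →
      ∫ γ, f γ ∂ν ≤ Ch * Cm.toReal := by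
    intro ν _ f hm h0 hb hν
    calc ∫ γ, f γ ∂ν ≤ ∫ _, Ch ∂ν := integral_mono (hint _ f hm h0 hb) (integrable_const Ch)
          (fun γ => hb γ)
      _ = (ν Set.univ).toReal * Ch := by rw [integral_const, smul_eq_mul]; rfl
      _ ≤ Cm.toReal * Ch := by
          exact mul_le_mul_of_nonneg_right (ENNReal.toReal_mono hCmlt.ne hν) hChnn
      _ = Ch * Cm.toReal := mul_comm _ _
  have hcobdd_r : IsCoboundedUnder (· ≤ ·) atTop (fun k => ∫ γ, F γ ∂(Pk k)) :=
    (isBoundedUnder_of (⟨0, fun k => integral_nonneg hF0⟩ :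
      ∃ b, ∀ k, b ≤ ∫ γ, F γ ∂(Pk k))).isCoboundedUnder_le
  -- the key estimate
  have key : ∀ n : ℕ, 1 ≤ n →
      limsup (fun k => ∫ γ, F γ ∂(Pk k)) atTop ≤ (∫ γ, Fn n γ ∂P) + Ch * C / n := by
    intro n hn
    have hbd_s : IsBoundedUnder (· ≤ ·) atTop (fun k => ∫ γ, Fn n γ ∂(Pk k)) :=
      isBoundedUnder_of ⟨Ch * Cm.toReal, fun k =>
        hbound_int (Pk k) (Fn n) (hFnm n) (hFn0 n) (hFnCh n) (hCmk k)⟩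
    have hcobdd_s : IsCoboundedUnder (· ≤ ·) atTop (fun k => ∫ γ, Fn n γ ∂(Pk k)) :=
      (isBoundedUnder_of (⟨0, fun k => integral_nonneg (hFn0 n)⟩ :
        ∃ b, ∀ k, b ≤ ∫ γ, Fn n γ ∂(Pk k))).isCoboundedUnder_le
    have hbd_sc : IsBoundedUnder (· ≤ ·) atTop
        (fun k => (∫ γ, Fn n γ ∂(Pk k)) + Ch * C / n) :=
      isBoundedUnder_of ⟨Ch * Cm.toReal + Ch * C / n, fun k => add_le_add
        (hbound_int (Pk k) (Fn n) (hFnm n) (hFn0 n) (hFnCh n) (hCmk k)) le_rfl⟩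
    calc limsup (fun k => ∫ γ, F γ ∂(Pk k)) atTop
        ≤ limsup (fun k => (∫ γ, Fn n γ ∂(Pk k)) + Ch * C / n) atTop :=
          limsup_le_limsup (Eventually.of_forall (stepB n hn)) hcobdd_r hbd_sc
      _ = limsup (fun k => ∫ γ, Fn n γ ∂(Pk k)) atTop + Ch * C / n :=
          limsup_add_const atTop _ _ hbd_s hcobdd_s
      _ ≤ (∫ γ, Fn n γ ∂P) + Ch * C / n := add_le_add (stepC n) le_rfl
  -- dominated convergence : ∫ Fn dP → ∫ F dP
  have hDCT : Tendsto (fun n => ∫ γ, Fn n γ ∂P) atTop (𝓝 (∫ γ, F γ ∂P)) := by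
    apply tendsto_integral_of_dominated_convergence (fun _ => Ch)
      (fun n => (hFnm n).aestronglyMeasurable) (integrable_const Ch)
    · intro n
      exact Eventually.of_forall fun γ => by
        rw [Real.norm_eq_abs, abs_of_nonneg (hFn0 n γ)]; exact hFnCh n γ
    · refine Eventually.of_forall fun γ => ?_
      obtain ⟨N, hN⟩ := exists_nat_ge (stopTime γ)
      apply tendsto_atTop_of_eventually_const (i₀ := N)
      intro i hi
      have : γ.1 ((i : ℝ≥0)) = γ.1 (stopTime γ) :=
        stopTime_spec γ (hN.trans (by exact_mod_cast hi))
      rw [hFndef, hFdef]; simp only []; rw [this]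
  have hlim : Tendsto (fun n : ℕ => (∫ γ, Fn n γ ∂P) + Ch * C / n) atTop
      (𝓝 ((∫ γ, F γ ∂P) + 0)) := by
    apply Tendsto.add hDCT
    simpa using tendsto_const_div_atTop_nhds_zero_nat (Ch * C)
  rw [add_zero] at hlim
  exact ge_of_tendsto hlim (eventually_atTop.2 ⟨1, fun n hn => key n hn⟩)
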